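/- Domination of prefixes is not sufficient for pruning: there exists a weighted temporal graph with vertices s,u,z and paths P¹,P² from s to u such that d(P¹)≤d(P²) and c(P¹)<c(P²) (P¹ dominates P²), yet P² is the prefix of the unique efficient (s,z)-path and P¹ extends to no (s,z)-path at all. -/

import Mathlib

/-- A weighted temporal edge: source, destination, availability time,
traversal time, and real cost. -/
structure TEdge (V : Type) where
  src : V
  dst : V
  time : ℕ
  lam : ℕ
  cost : ℝ

variable {V : Type}

/-- Temporal compatibility of consecutive edges. -/
def TEdge.Compat (e f : TEdge V) : Prop := e.dst = f.src ∧ e.time + e.lam ≤ f.time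

/-- A temporal (s,z)-walk in the edge set `E`. -/
def IsWalk (E : Set (TEdge V)) (s z : V) (P : List (TEdge V)) : Prop :=
  P ≠ [] ∧ (∀ e ∈ P, e ∈ E) ∧ P.Chain' TEdge.Compat ∧
  (∀ e, P.head? = some e → e.src = s) ∧ (∀ e, P.getLast? = some e → e.dst = z)

/-- The sequence of vertices visited by a walk. -/
def visitedVerts (P : List (TEdge V)) : List V :=
  (P.head?.elim [] fun e => [e.src]) ++ P.map TEdge.dst

/-- A temporal path: a simple temporal walk. -/
def IsPath (E : Set (TEdge V)) (s z : V) (P : List (TEdge V)) : Prop :=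
  IsWalk E s z P ∧ (visitedVerts P).Nodup

/-- Cost of a walk. -/
noncomputable def wcost (P : List (TEdge V)) : ℝ := (P.map TEdge.cost).sum

/-- Arrival time of a walk. -/
def warr (P : List (TEdge V)) : ℕ := P.getLast?.elim 0 fun e => e.time + e.lam

/-- Starting time of a walk. -/
def wstart (P : List (TEdge V)) : ℕ := P.head?.elim 0 fun e => e.time

/-- Duration of a walk. -/
def wdur (P : List (TEdge V)) : ℕ := warr P - wstart P

/-- `Q` dominates `P` w.r.t. cost and the temporal objective `f`. -/
def Dominates (f : List (TEdge V) → ℕ) (Q P : List (TEdge V)) : Prop :=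
  (wcost Q < wcost P ∧ f Q ≤ f P) ∨ (wcost Q ≤ wcost P ∧ f Q < f P)

/-- `P` is efficient within the set `X` w.r.t. cost and objective `f`. -/
def EfficientIn (X : Set (List (TEdge V))) (f : List (TEdge V) → ℕ) (P : List (TEdge V)) : Prop :=
  P ∈ X ∧ ∀ Q ∈ X, ¬ Dominates f Q P

/-- domination of prefixes does not allow pruning: there is a
temporal graph with (s,u)-paths P¹ dominating P² w.r.t. (duration, cost), yet
P² is the prefix of the unique efficient (s,z)-path and P¹ extends to no
(s,z)-path. -/
def E1 : TEdge ℕ := ⟨0, 1, 5, 5, 5⟩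
def E2 : TEdge ℕ := ⟨0, 1, 1, 6, 6⟩
def E3 : TEdge ℕ := ⟨1, 2, 8, 1, 1⟩

def Eset : Set (TEdge ℕ) := {E1, E2, E3}

lemma classify (P : List (TEdge ℕ)) (h : IsPath Eset 0 2 P) : P = [E2, E3] := by
  obtain ⟨⟨hne, hmem, hchain, hhead, hlast⟩, _⟩ := h
  match P with
  | [] => exact absurd rfl hne
  | [a] =>
    have ha : a ∈ Eset := hmem a (by simp)
    have h1 : a.src = 0 := hhead a rfl
    have h2 : a.dst = 2 := hlast a rfl
    rcases ha with rfl | rfl | rfl <;> simp [E1, E2, E3] at h1 h2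
  | a :: b :: rest =>
    have ha : a ∈ Eset := hmem a (by simp)
    have hb : b ∈ Eset := hmem b (by simp)
    have h1 : a.src = 0 := hhead a rfl
    have hab : TEdge.Compat a b := (List.isChain_cons_cons.mp hchain).1
    have hb3 : b = E3 := by
      have hd : a.dst = 1 := by
        rcases ha with rfl | rfl | rfl <;> simp [E1, E2, E3] at h1 ⊢
      have hbs : b.src = 1 := hd ▸ hab.1.symm
      rcases hb with rfl | rfl | rfl <;> simp [E1, E2, E3] at hbs ⊢
    subst hb3
    match rest with
    | [] =>
      have ht : a.time + a.lam ≤ 8 := hab.2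
      rcases ha with rfl | rfl | rfl <;> simp [E1, E2, E3] at h1 ht ⊢
    | c :: rest' =>
      have hc : c ∈ Eset := hmem c (by simp)
      have hbc : TEdge.Compat E3 c := (List.isChain_cons_cons.mp (List.isChain_cons_cons.mp hchain).2).1
      have : c.src = 2 := by simpa [E3] using hbc.1.symm
      rcases hc with rfl | rfl | rfl <;> simp [E1, E2, E3] at this

lemma pathQ : IsPath Eset 0 2 [E2, E3] := by
  refine ⟨⟨by simp, ?_, ?_, ?_, ?_⟩, ?_⟩
  · intro e he; simp at he; rcases he with rfl | rfl <;> simp [Eset]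
  · simp [List.Chain', List.isChain_cons_cons, TEdge.Compat, E2, E3]
  · intro e he; simp at he; subst he; rfl
  · intro e he; simp [List.getLast?] at he; subst he; rfl
  · simp [visitedVerts, E2, E3]

lemma path1 : IsPath Eset 0 1 [E1] := by
  refine ⟨⟨by simp, ?_, by simp [List.Chain'], ?_, ?_⟩, ?_⟩
  · intro e he; simp at he; subst he; simp [Eset]
  · intro e he; simp at he; subst he; rfl
  · intro e he; simp [List.getLast?] at he; subst he; rfl
  · simp [visitedVerts, E1]

lemma path2 : IsPath Eset 0 1 [E2] := by
  refine ⟨⟨by simp, ?_, by simp [List.Chain'], ?_, ?_⟩, ?_⟩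
  · intro e he; simp at he; subst he; simp [Eset]
  · intro e he; simp at he; subst he; rfl
  · intro e he; simp [List.getLast?] at he; subst he; rfl
  · simp [visitedVerts, E2]

theorem stmt10' : ∃ (E : Set (TEdge ℕ)) (s u z : ℕ) (P1 P2 : List (TEdge ℕ)),
    IsPath E s u P1 ∧ IsPath E s u P2 ∧
    wdur P1 ≤ wdur P2 ∧ wcost P1 < wcost P2 ∧
    (∃! Q, EfficientIn {W | IsPath E s z W} wdur Q) ∧
    (∀ Q, EfficientIn {W | IsPath E s z W} wdur Q → ∃ R, Q = P2 ++ R) ∧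
    (∀ R, ¬ IsPath E s z (P1 ++ R)) := by
  refine ⟨Eset, 0, 1, 2, [E1], [E2], path1, path2, ?_, ?_, ?_, ?_, ?_⟩
  · simp [wdur, warr, wstart, E1, E2, List.getLast?]
  · simp [wcost, E1, E2]; norm_num
  · refine ⟨[E2, E3], ⟨pathQ, ?_⟩, ?_⟩
    · intro Q hQ
      have := classify Q hQ
      subst this
      simp [Dominates]
    · intro Q hQ
      exact classify Q hQ.1
  · intro Q hQ
    exact ⟨[E3], classify Q hQ.1⟩
  · intro R hR
    have := classify _ hR
    have : E1 = E2 := by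
      have := congrArg List.head? this
      simpa using this
    simp [E1, E2] at this

theorem stmt10 : ∃ (E : Set (TEdge ℕ)) (s u z : ℕ) (P1 P2 : List (TEdge ℕ)),
    IsPath E s u P1 ∧ IsPath E s u P2 ∧
    wdur P1 ≤ wdur P2 ∧ wcost P1 < wcost P2 ∧
    (∃! Q, EfficientIn {W | IsPath E s z W} wdur Q) ∧
    (∀ Q, EfficientIn {W | IsPath E s z W} wdur Q → ∃ R, Q = P2 ++ R) ∧
    (∀ R, ¬ IsPath E s z (P1 ++ R)) := stmt10'
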